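/- There exists a constant G > 0, depending only on d, σ, the bounds sup_{t∈[0,1)}|α_t α̇_t|, sup_{t∈[0,1)}|β̇_t|, and the lower bound inf_{t∈[0,1]}(α_t² + σ²β_t²) > 0, such that for every t ∈ [0,1) and all x, x′ ∈ ℝ^d, ‖b*(t,x) − b*(t,x′)‖₂ ≤ G ‖x − x′‖₂; that is, the velocity field is Lipschitz continuous in the spatial variable, uniformly in time. -/

import Mathlib

open MeasureTheory Real

noncomputable section


private lemma exp_sub_one_abs (x : ℝ) : |Real.exp x - 1| ≤ |x| * Real.exp |x| := by
  have h1 : Real.exp (-x) * Real.exp x = 1 := by rw [← Real.exp_add]; simp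
  rcases le_or_gt 0 x with h | h
  · rw [abs_of_nonneg h,
      abs_of_nonneg (by nlinarith [Real.add_one_le_exp x] : (0:ℝ) ≤ Real.exp x - 1)]
    nlinarith [Real.add_one_le_exp (-x), Real.exp_pos x]
  · rw [abs_of_neg h,
      abs_of_nonpos (by nlinarith [Real.exp_lt_one_iff.mpr h] : Real.exp x - 1 ≤ 0)]
    nlinarith [Real.add_one_le_exp x, Real.one_le_exp (by linarith : (0:ℝ) ≤ -x)]

private lemma cube_norm_le {d : ℕ} (u : EuclideanSpace ℝ (Fin d))
    (hu : ∀ i, u i ∈ Set.Icc (0:ℝ) 1) : ‖u‖ ≤ Real.sqrt d := by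
  rw [EuclideanSpace.norm_eq]
  apply Real.sqrt_le_sqrt
  calc ∑ i, ‖u i‖ ^ 2 ≤ ∑ _i : Fin d, (1:ℝ) := by
        apply Finset.sum_le_sum
        intro i _
        have := hu i
        rw [Real.norm_eq_abs]
        nlinarith [this.1, this.2, sq_abs (u i)]
    _ = d := by simp

private lemma w_cont {d : ℕ} (y : EuclideanSpace ℝ (Fin d)) (b s : ℝ) :
    Continuous (fun u : EuclideanSpace ℝ (Fin d) =>
      Real.exp (-‖y - b • u‖ ^ 2 / (2 * s))) := by
  fun_prop

private lemma w_integrable {d : ℕ} (ν : Measure (EuclideanSpace ℝ (Fin d)))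
    [IsProbabilityMeasure ν] (y : EuclideanSpace ℝ (Fin d)) (b s : ℝ) (hs : 0 < s) :
    Integrable (fun u => Real.exp (-‖y - b • u‖ ^ 2 / (2 * s))) ν := by
  refine Integrable.mono' (integrable_const 1) ((w_cont y b s).aestronglyMeasurable) ?_
  filter_upwards with u
  rw [Real.norm_eq_abs, abs_of_pos (Real.exp_pos _)]
  rw [Real.exp_le_one_iff]
  apply div_nonpos_of_nonpos_of_nonneg
  · simp [sq_nonneg]
  · linarith

private lemma wu_integrable {d : ℕ} (ν : Measure (EuclideanSpace ℝ (Fin d)))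
    [IsProbabilityMeasure ν] (hν : ∀ᵐ u ∂ν, ∀ i, u i ∈ Set.Icc (0:ℝ) 1)
    (y : EuclideanSpace ℝ (Fin d)) (b s : ℝ) (hs : 0 < s) :
    Integrable (fun u => Real.exp (-‖y - b • u‖ ^ 2 / (2 * s)) • u) ν := by
  refine Integrable.mono' (integrable_const (Real.sqrt d))
    (((w_cont y b s).smul continuous_id).aestronglyMeasurable) ?_
  filter_upwards [hν] with u hu
  rw [norm_smul, Real.norm_eq_abs, abs_of_pos (Real.exp_pos _)]
  calc Real.exp (-‖y - b • u‖ ^ 2 / (2 * s)) * ‖u‖ ≤ 1 * Real.sqrt d := by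
        apply mul_le_mul _ (cube_norm_le u hu) (norm_nonneg _) zero_le_one
        rw [Real.exp_le_one_iff]
        apply div_nonpos_of_nonpos_of_nonneg
        · simp [sq_nonneg]
        · linarith
    _ = Real.sqrt d := one_mul _

private lemma Z_pos {d : ℕ} (ν : Measure (EuclideanSpace ℝ (Fin d)))
    [IsProbabilityMeasure ν] (hν : ∀ᵐ u ∂ν, ∀ i, u i ∈ Set.Icc (0:ℝ) 1)
    (y : EuclideanSpace ℝ (Fin d)) (b s : ℝ) (hb0 : 0 ≤ b) (hb1 : b ≤ 1) (hs : 0 < s) :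
    0 < ∫ u, Real.exp (-‖y - b • u‖ ^ 2 / (2 * s)) ∂ν := by
  have hc : (0:ℝ) < Real.exp (-(‖y‖ + Real.sqrt d) ^ 2 / (2 * s)) := Real.exp_pos _
  have : Real.exp (-(‖y‖ + Real.sqrt d) ^ 2 / (2 * s))
      ≤ ∫ u, Real.exp (-‖y - b • u‖ ^ 2 / (2 * s)) ∂ν := by
    have hint := w_integrable ν y b s hs
    have := integral_mono_ae (integrable_const
      (Real.exp (-(‖y‖ + Real.sqrt d) ^ 2 / (2 * s)))) hint ?_
    · simpa using this
    · filter_upwards [hν] with u hu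
      apply Real.exp_le_exp.mpr
      rw [div_le_div_iff_of_pos_right (by linarith : (0:ℝ) < 2*s)]
      have hnorm : ‖y - b • u‖ ≤ ‖y‖ + Real.sqrt d := by
        calc ‖y - b • u‖ ≤ ‖y‖ + ‖b • u‖ := norm_sub_le _ _
          _ ≤ ‖y‖ + Real.sqrt d := by
              rw [norm_smul, Real.norm_eq_abs, abs_of_nonneg hb0]
              have := cube_norm_le u hu
              nlinarith [Real.sqrt_nonneg (d:ℝ), norm_nonneg u]
      nlinarith [norm_nonneg (y - b • u), norm_nonneg y, Real.sqrt_nonneg (d:ℝ)]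
  linarith

private lemma m_norm_le {d : ℕ} (ν : Measure (EuclideanSpace ℝ (Fin d)))
    [IsProbabilityMeasure ν] (hν : ∀ᵐ u ∂ν, ∀ i, u i ∈ Set.Icc (0:ℝ) 1)
    (y : EuclideanSpace ℝ (Fin d)) (b s : ℝ) (hb0 : 0 ≤ b) (hb1 : b ≤ 1) (hs : 0 < s) :
    ‖(∫ u, Real.exp (-‖y - b • u‖ ^ 2 / (2 * s)) ∂ν)⁻¹ •
      ∫ u, Real.exp (-‖y - b • u‖ ^ 2 / (2 * s)) • u ∂ν‖ ≤ Real.sqrt d := by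
  set Z := ∫ u, Real.exp (-‖y - b • u‖ ^ 2 / (2 * s)) ∂ν with hZdef
  have hZ : 0 < Z := Z_pos ν hν y b s hb0 hb1 hs
  have hbound : ‖∫ u, Real.exp (-‖y - b • u‖ ^ 2 / (2 * s)) • u ∂ν‖
      ≤ Z * Real.sqrt d := by
    have h1 : ‖∫ u, Real.exp (-‖y - b • u‖ ^ 2 / (2 * s)) • u ∂ν‖
        ≤ ∫ u, Real.exp (-‖y - b • u‖ ^ 2 / (2 * s)) * Real.sqrt d ∂ν := by
      apply norm_integral_le_of_norm_le ((w_integrable ν y b s hs).mul_const _)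
      filter_upwards [hν] with u hu
      rw [norm_smul, Real.norm_eq_abs, abs_of_pos (Real.exp_pos _)]
      exact mul_le_mul_of_nonneg_left (cube_norm_le u hu) (Real.exp_pos _).le
    rwa [integral_mul_const] at h1
  rw [norm_smul, Real.norm_eq_abs, abs_of_pos (inv_pos.mpr hZ)]
  calc Z⁻¹ * ‖∫ u, Real.exp (-‖y - b • u‖ ^ 2 / (2 * s)) • u ∂ν‖
      ≤ Z⁻¹ * (Z * Real.sqrt d) :=
        mul_le_mul_of_nonneg_left hbound (inv_pos.mpr hZ).le
    _ = Real.sqrt d := by field_simp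

private lemma exp_identity {d : ℕ} (b s : ℝ) (hs : 0 < s)
    (x x' u : EuclideanSpace ℝ (Fin d)) :
    Real.exp ((‖x'‖^2 - ‖x‖^2)/(2*s)) * Real.exp (-‖x' - b • u‖ ^ 2 / (2 * s))
      = Real.exp (-‖x - b • u‖ ^ 2 / (2 * s)) *
        Real.exp (-(b * (inner ℝ (x - x') u : ℝ) / s)) := by
  rw [← Real.exp_add, ← Real.exp_add]
  congr 1
  have e1 : ‖x' - b • u‖ ^ 2 = ‖x'‖^2 - 2*(b*(inner ℝ x' u : ℝ)) + b^2*‖u‖^2 := by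
    rw [norm_sub_sq_real, real_inner_smul_right, norm_smul]
    simp [mul_pow]
  have e2 : ‖x - b • u‖ ^ 2 = ‖x‖^2 - 2*(b*(inner ℝ x u : ℝ)) + b^2*‖u‖^2 := by
    rw [norm_sub_sq_real, real_inner_smul_right, norm_smul]
    simp [mul_pow]
  have e3 : (inner ℝ (x - x') u : ℝ) = (inner ℝ x u : ℝ) - (inner ℝ x' u : ℝ) :=
    inner_sub_left _ _ _
  rw [e1, e2, e3]
  field_simp
  ring

set_option maxHeartbeats 1000000 in
private lemma ubar_lipschitz {d : ℕ} (hd : 1 ≤ d)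
    (ν : Measure (EuclideanSpace ℝ (Fin d))) [IsProbabilityMeasure ν]
    (hν : ∀ᵐ u ∂ν, ∀ i, u i ∈ Set.Icc (0:ℝ) 1)
    (b s clow : ℝ) (hb0 : 0 ≤ b) (hb1 : b ≤ 1) (hcl : 0 < clow) (hscl : clow ≤ s)
    (x x' : EuclideanSpace ℝ (Fin d)) :
    ‖(∫ u, Real.exp (-‖x - b • u‖ ^ 2 / (2 * s)) ∂ν)⁻¹ •
        (∫ u, Real.exp (-‖x - b • u‖ ^ 2 / (2 * s)) • u ∂ν)
      - (∫ u, Real.exp (-‖x' - b • u‖ ^ 2 / (2 * s)) ∂ν)⁻¹ •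
        (∫ u, Real.exp (-‖x' - b • u‖ ^ 2 / (2 * s)) • u ∂ν)‖
      ≤ 2 * d * Real.exp 1 / clow * ‖x - x'‖ := by
  have hs : 0 < s := lt_of_lt_of_le hcl hscl
  have hdpos : (0:ℝ) < d := by exact_mod_cast Nat.lt_of_lt_of_le Nat.zero_lt_one hd
  set sd := Real.sqrt d with hsddef
  have hsd : (0:ℝ) < sd := Real.sqrt_pos.mpr hdpos
  have hsdsq : sd * sd = d := Real.mul_self_sqrt (le_of_lt hdpos)
  have he1 : (1:ℝ) ≤ Real.exp 1 := Real.one_le_exp zero_le_one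
  set W : EuclideanSpace ℝ (Fin d) → ℝ :=
    fun u => Real.exp (-‖x - b • u‖ ^ 2 / (2 * s)) with hWdef
  set W' : EuclideanSpace ℝ (Fin d) → ℝ :=
    fun u => Real.exp (-‖x' - b • u‖ ^ 2 / (2 * s)) with hW'def
  set Z := ∫ u, W u ∂ν with hZdef
  set Z' := ∫ u, W' u ∂ν with hZ'def
  have hZ : 0 < Z := Z_pos ν hν x b s hb0 hb1 hs
  have hZ' : 0 < Z' := Z_pos ν hν x' b s hb0 hb1 hs
  set M := Z⁻¹ • ∫ u, W u • u ∂ν with hMdef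
  set m := Z'⁻¹ • ∫ u, W' u • u ∂ν with hmdef
  have hMn : ‖M‖ ≤ sd := m_norm_le ν hν x b s hb0 hb1 hs
  have hmn : ‖m‖ ≤ sd := m_norm_le ν hν x' b s hb0 hb1 hs
  show ‖M - m‖ ≤ 2 * d * Real.exp 1 / clow * ‖x - x'‖
  rcases le_or_gt (‖x - x'‖) (clow / sd) with hcase | hcase
  swap
  · -- large separation: trivial bound
    have h1 : ‖M - m‖ ≤ 2 * sd := by
      calc ‖M - m‖ ≤ ‖M‖ + ‖m‖ := norm_sub_le _ _
        _ ≤ 2 * sd := by linarith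
    have h2 : 2 * sd ≤ 2 * d * Real.exp 1 / clow * ‖x - x'‖ := by
      rw [div_mul_eq_mul_div, le_div_iff₀ hcl]
      have h3 : clow < sd * ‖x - x'‖ := by
        rw [div_lt_iff₀ hsd] at hcase
        linarith [hcase]
      have h4 : 2 * sd * clow ≤ 2 * sd * (sd * ‖x - x'‖) := by nlinarith
      have hA : (0:ℝ) ≤ 2 * (sd * sd) * ‖x - x'‖ := by positivity
      have h5 : 2 * (sd * sd) * ‖x - x'‖ ≤ 2 * (sd * sd) * ‖x - x'‖ * Real.exp 1 :=
        le_mul_of_one_le_right hA he1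
      rw [hsdsq] at h5
      nlinarith
    linarith
  · -- small separation: main estimate
    set lam := Real.exp ((‖x'‖^2 - ‖x‖^2)/(2*s)) with hlamdef
    have hlam : 0 < lam := Real.exp_pos _
    set th : EuclideanSpace ℝ (Fin d) → ℝ :=
      fun u => b * (inner ℝ (x - x') u : ℝ) / s with hthdef
    have hkey : ∀ u, lam * W' u = W u * Real.exp (-(th u)) :=
      fun u => exp_identity b s hs x x' u
    set T := sd * ‖x - x'‖ / clow with hTdef
    have hT0 : 0 ≤ T := by positivity
    have hT1 : T ≤ 1 := by
      rw [hTdef, div_le_one hcl]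
      calc sd * ‖x - x'‖ ≤ sd * (clow / sd) := by
            exact mul_le_mul_of_nonneg_left hcase hsd.le
        _ = clow := by field_simp
    have hWint : Integrable W ν := w_integrable ν x b s hs
    have hW'int : Integrable W' ν := w_integrable ν x' b s hs
    have hWuint : Integrable (fun u => W u • u) ν := wu_integrable ν hν x b s hs
    have hW'uint : Integrable (fun u => W' u • u) ν := wu_integrable ν hν x' b s hs
    -- the difference function
    set g : EuclideanSpace ℝ (Fin d) → EuclideanSpace ℝ (Fin d) :=
      fun u => (W u - lam * W' u) • (u - m) with hgdef
    have hIu' : Z' • m = ∫ u, W' u • u ∂ν := by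
      rw [hmdef, smul_smul, mul_inv_cancel₀ hZ'.ne', one_smul]
    have hgsplit : g = fun u =>
        (W u • u - W u • m) - (lam • (W' u • u) - lam • (W' u • m)) := by
      funext u
      simp only [hgdef, sub_smul, smul_sub, smul_smul]
      module
    have hint1 : Integrable (fun u => W u • u - W u • m) ν :=
      hWuint.sub (hWint.smul_const m)
    have hint2 : Integrable (fun u => lam • (W' u • u) - lam • (W' u • m)) ν :=
      (hW'uint.smul lam).sub ((hW'int.smul_const m).smul lam)
    have hsplit : (∫ u, g u ∂ν) = (∫ u, W u • u ∂ν) - Z • m := by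
      have hi5 : Integrable (fun u => lam • (W' u • u)) ν := hW'uint.smul lam
      have hi6 : Integrable (fun u => lam • (W' u • m)) ν :=
        (hW'int.smul_const m).smul lam
      have i1 : ∫ u, (W u • u - W u • m) ∂ν = (∫ u, W u • u ∂ν) - Z • m := by
        rw [integral_sub hWuint (hWint.smul_const m), integral_smul_const]
      have i2 : ∫ u, (lam • (W' u • u) - lam • (W' u • m)) ∂ν = 0 := by
        rw [integral_sub hi5 hi6, integral_smul, integral_smul, integral_smul_const,
          ← hZ'def, hIu']
        simp
      rw [hgsplit, integral_sub hint1 hint2, i1, i2, sub_zero]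
    have hMm : M - m = Z⁻¹ • ∫ u, g u ∂ν := by
      rw [hsplit, smul_sub, smul_smul, inv_mul_cancel₀ hZ.ne', one_smul, hMdef]
    -- pointwise bound on g
    have hgbound : ∀ᵐ u ∂ν, ‖g u‖ ≤ W u * (T * Real.exp T * (2 * sd)) := by
      filter_upwards [hν] with u hu
      have hWu : 0 < W u := Real.exp_pos _
      have hthb : |th u| ≤ T := by
        rw [hthdef]
        simp only
        rw [abs_div, abs_of_pos hs]
        apply div_le_div₀ (by positivity) _ hcl hscl
        rw [abs_mul, abs_of_nonneg hb0]
        calc b * |(inner ℝ (x - x') u : ℝ)| ≤ 1 * (‖x - x'‖ * ‖u‖) := by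
              apply mul_le_mul hb1 (abs_real_inner_le_norm _ _)
                (abs_nonneg _) zero_le_one
          _ ≤ ‖x - x'‖ * sd := by
              rw [one_mul]
              exact mul_le_mul_of_nonneg_left (cube_norm_le u hu) (norm_nonneg _)
          _ = sd * ‖x - x'‖ := mul_comm _ _
      have hexpb : |Real.exp (-(th u)) - 1| ≤ T * Real.exp T := by
        calc |Real.exp (-(th u)) - 1| ≤ |(-(th u))| * Real.exp |(-(th u))| :=
              exp_sub_one_abs _
          _ ≤ T * Real.exp T := by
              rw [abs_neg]
              exact mul_le_mul hthb (Real.exp_le_exp.mpr hthb) (Real.exp_pos _).le hT0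
      have humn : ‖u - m‖ ≤ 2 * sd := by
        calc ‖u - m‖ ≤ ‖u‖ + ‖m‖ := norm_sub_le _ _
          _ ≤ 2 * sd := by linarith [cube_norm_le u hu]
      calc ‖g u‖ = |W u - lam * W' u| * ‖u - m‖ := by
            rw [hgdef]; simp only [norm_smul, Real.norm_eq_abs]
        _ = W u * |Real.exp (-(th u)) - 1| * ‖u - m‖ := by
            rw [hkey u]
            congr 1
            rw [show W u - W u * Real.exp (-(th u))
                = W u * -(Real.exp (-(th u)) - 1) by ring, abs_mul,
              abs_neg, abs_of_pos hWu]
        _ ≤ W u * (T * Real.exp T) * (2 * sd) := by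
            apply mul_le_mul _ humn (norm_nonneg _) (by positivity)
            exact mul_le_mul_of_nonneg_left hexpb hWu.le
        _ = W u * (T * Real.exp T * (2 * sd)) := by ring
    have hnormint : ‖∫ u, g u ∂ν‖ ≤ Z * (T * Real.exp T * (2 * sd)) := by
      have h1 : ‖∫ u, g u ∂ν‖ ≤ ∫ u, W u * (T * Real.exp T * (2 * sd)) ∂ν :=
        norm_integral_le_of_norm_le (hWint.mul_const _) hgbound
      rwa [integral_mul_const, ← hZdef] at h1
    rw [hMm, norm_smul, Real.norm_eq_abs, abs_of_pos (inv_pos.mpr hZ)]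
    calc Z⁻¹ * ‖∫ u, g u ∂ν‖ ≤ Z⁻¹ * (Z * (T * Real.exp T * (2 * sd))) :=
          mul_le_mul_of_nonneg_left hnormint (inv_pos.mpr hZ).le
      _ = T * Real.exp T * (2 * sd) := by field_simp
      _ ≤ T * Real.exp 1 * (2 * sd) := by
          apply mul_le_mul_of_nonneg_right _ (by positivity)
          exact mul_le_mul_of_nonneg_left (Real.exp_le_exp.mpr hT1) hT0
      _ = 2 * d * Real.exp 1 / clow * ‖x - x'‖ := by
          rw [hTdef, ← hsdsq]
          generalize ‖x - x'‖ = r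
          field_simp


set_option maxHeartbeats 1000000 in
/-- Corollary III.8 of the paper, uniform spatial Lipschitz continuity
of the velocity. Under Condition 3.1 on the interpolation coefficients `α, β` (with
derivative data `α', β'`), the bounds `|α_t α̇_t| ≤ Cα`, `|β̇_t| ≤ Cβ` on `[0,1)` and the
lower bound `0 < clow ≤ α_t² + σ²β_t²` on `[0,1]`, and with `ν` a probability measure
supported in the unit cube, there is a constant `G > 0` such that for every `t ∈ [0,1)`
and all `x, x'`, `‖b*(t,x) - b*(t,x')‖₂ ≤ G ‖x - x'‖₂`. -/
theorem velocity_uniform_lipschitz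
    {d : ℕ} (hd : 1 ≤ d) (σ : ℝ) (hσ : 0 < σ)
    (α β α' β' : ℝ → ℝ)
    (hαcont : ContinuousOn α (Set.Icc 0 1)) (hβcont : ContinuousOn β (Set.Icc 0 1))
    (hαderiv : ∀ t ∈ Set.Ico (0 : ℝ) 1, HasDerivWithinAt α (α' t) (Set.Icc 0 1) t)
    (hβderiv : ∀ t ∈ Set.Ico (0 : ℝ) 1, HasDerivWithinAt β (β' t) (Set.Icc 0 1) t)
    (hαanti : AntitoneOn α (Set.Icc 0 1)) (hβmono : MonotoneOn β (Set.Icc 0 1))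
    (hα0 : α 0 = 1) (hα1 : α 1 = 0) (hβ0 : β 0 = 0) (hβ1 : β 1 = 1)
    (hrange : ∀ t ∈ Set.Icc (0 : ℝ) 1,
      α t ∈ Set.Icc (0 : ℝ) 1 ∧ β t ∈ Set.Icc (0 : ℝ) 1)
    (hposdef : ∀ t ∈ Set.Icc (0 : ℝ) 1, 0 < (α t) ^ 2 + (β t) ^ 2)
    (Cα Cβ clow : ℝ) (hclow : 0 < clow)
    (hCα : ∀ t ∈ Set.Ico (0 : ℝ) 1, |α t * α' t| ≤ Cα)
    (hCβ : ∀ t ∈ Set.Ico (0 : ℝ) 1, |β' t| ≤ Cβ)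
    (hlow : ∀ t ∈ Set.Icc (0 : ℝ) 1, clow ≤ (α t) ^ 2 + σ ^ 2 * (β t) ^ 2)
    (ν : Measure (EuclideanSpace ℝ (Fin d))) [IsProbabilityMeasure ν]
    (hνsupp : ∀ᵐ u ∂ν, ∀ i, u i ∈ Set.Icc (0 : ℝ) 1)
    (s2 : ℝ → ℝ) (hs2 : ∀ t, s2 t = (α t) ^ 2 + σ ^ 2 * (β t) ^ 2)
    (w : ℝ → EuclideanSpace ℝ (Fin d) → EuclideanSpace ℝ (Fin d) → ℝ)
    (hw : ∀ t x u, w t x u = Real.exp (-‖x - β t • u‖ ^ 2 / (2 * s2 t)))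
    (ubar : ℝ → EuclideanSpace ℝ (Fin d) → EuclideanSpace ℝ (Fin d))
    (hubar : ∀ t x, ubar t x = (∫ u, w t x u ∂ν)⁻¹ • ∫ u, w t x u • u ∂ν)
    (c₁ c₂ : ℝ → ℝ)
    (hc₁ : ∀ t, c₁ t = α t * (α t * β' t - α' t * β t) / s2 t)
    (hc₂ : ∀ t, c₂ t = (α t * α' t + σ ^ 2 * β t * β' t) / s2 t)
    (bstar : ℝ → EuclideanSpace ℝ (Fin d) → EuclideanSpace ℝ (Fin d))
    (hbstar : ∀ t x, bstar t x = c₁ t • ubar t x + c₂ t • x) :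
    ∃ G > 0, ∀ t ∈ Set.Ico (0 : ℝ) 1,
      ∀ x x' : EuclideanSpace ℝ (Fin d),
        ‖bstar t x - bstar t x'‖ ≤ G * ‖x - x'‖ := by
  have h0mem : (0:ℝ) ∈ Set.Ico (0:ℝ) 1 := ⟨le_refl 0, zero_lt_one⟩
  have hCα0 : 0 ≤ Cα := le_trans (abs_nonneg _) (hCα 0 h0mem)
  have hCβ0 : 0 ≤ Cβ := le_trans (abs_nonneg _) (hCβ 0 h0mem)
  set L := 2 * (d:ℝ) * Real.exp 1 / clow with hLdef
  have hL0 : 0 ≤ L := div_nonneg (by positivity) hclow.le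
  refine ⟨(Cα + Cβ) / clow * L + (Cα + σ ^ 2 * Cβ) / clow + 1, ?_, ?_⟩
  · have h1 : 0 ≤ (Cα + Cβ) / clow * L :=
      mul_nonneg (div_nonneg (by linarith) hclow.le) hL0
    have h2 : 0 ≤ (Cα + σ ^ 2 * Cβ) / clow :=
      div_nonneg (by nlinarith) hclow.le
    linarith
  intro t ht x x'
  have ht' : t ∈ Set.Icc (0:ℝ) 1 := ⟨ht.1, ht.2.le⟩
  obtain ⟨hα, hβ⟩ := hrange t ht'
  have hslow : clow ≤ s2 t := by rw [hs2]; exact hlow t ht'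
  have hs2pos : 0 < s2 t := lt_of_lt_of_le hclow hslow
  have hαabs : |α t| ≤ 1 := abs_le.mpr ⟨by linarith [hα.1], hα.2⟩
  have hβabs : |β t| ≤ 1 := abs_le.mpr ⟨by linarith [hβ.1], hβ.2⟩
  have h1 := hCα t ht
  have h2 := hCβ t ht
  -- bound on c₁
  have hc1b : |c₁ t| ≤ (Cα + Cβ) / clow := by
    rw [hc₁, abs_div, abs_of_pos hs2pos]
    apply div_le_div₀ (by linarith) ?_ hclow hslow
    calc |α t * (α t * β' t - α' t * β t)|
        = |α t * α t * β' t - α t * α' t * β t| := by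
          congr 1; ring
      _ ≤ |α t * α t * β' t| + |α t * α' t * β t| := abs_sub _ _
      _ ≤ Cα + Cβ := by
          have h3 : |α t * α t * β' t| ≤ Cβ := by
            rw [abs_mul, abs_mul]
            have g1 : |α t| * |α t| * |β' t| ≤ 1 * |β' t| :=
              mul_le_mul_of_nonneg_right (by nlinarith [abs_nonneg (α t)]) (abs_nonneg _)
            linarith
          have h4 : |α t * α' t * β t| ≤ Cα := by
            rw [abs_mul]
            have g2 := mul_le_mul h1 hβabs (abs_nonneg (β t)) hCα0
            linarith
          linarith
  -- bound on c₂
  have hc2b : |c₂ t| ≤ (Cα + σ ^ 2 * Cβ) / clow := by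
    rw [hc₂, abs_div, abs_of_pos hs2pos]
    apply div_le_div₀ (by nlinarith) ?_ hclow hslow
    calc |α t * α' t + σ ^ 2 * β t * β' t|
        ≤ |α t * α' t| + |σ ^ 2 * β t * β' t| := abs_add_le _ _
      _ ≤ Cα + σ ^ 2 * Cβ := by
          have h5 : |σ ^ 2 * β t * β' t| ≤ σ ^ 2 * Cβ := by
            rw [abs_mul, abs_mul, abs_of_pos (by positivity : (0:ℝ) < σ ^ 2)]
            have g3 : |β t| * |β' t| ≤ 1 * Cβ :=
              mul_le_mul hβabs h2 (abs_nonneg _) zero_le_one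
            nlinarith [mul_le_mul_of_nonneg_left g3 (sq_nonneg σ)]
          linarith
  -- Lipschitz bound for ubar
  have hub : ‖ubar t x - ubar t x'‖ ≤ L * ‖x - x'‖ := by
    rw [hubar, hubar]
    simp only [hw]
    exact ubar_lipschitz hd ν hνsupp (β t) (s2 t) clow hβ.1 hβ.2 hclow hslow x x'
  -- combine
  rw [hbstar, hbstar]
  have hsplit : c₁ t • ubar t x + c₂ t • x - (c₁ t • ubar t x' + c₂ t • x')
      = c₁ t • (ubar t x - ubar t x') + c₂ t • (x - x') := by module
  rw [hsplit]
  calc ‖c₁ t • (ubar t x - ubar t x') + c₂ t • (x - x')‖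
      ≤ ‖c₁ t • (ubar t x - ubar t x')‖ + ‖c₂ t • (x - x')‖ := norm_add_le _ _
    _ = |c₁ t| * ‖ubar t x - ubar t x'‖ + |c₂ t| * ‖x - x'‖ := by
        rw [norm_smul, norm_smul, Real.norm_eq_abs, Real.norm_eq_abs]
    _ ≤ (Cα + Cβ) / clow * (L * ‖x - x'‖) + (Cα + σ ^ 2 * Cβ) / clow * ‖x - x'‖ := by
        have hn1 : |c₁ t| * ‖ubar t x - ubar t x'‖ ≤ (Cα + Cβ) / clow * (L * ‖x - x'‖) := by
          apply mul_le_mul hc1b hub (norm_nonneg _)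
          exact div_nonneg (by linarith) hclow.le
        have hn2 : |c₂ t| * ‖x - x'‖ ≤ (Cα + σ ^ 2 * Cβ) / clow * ‖x - x'‖ :=
          mul_le_mul_of_nonneg_right hc2b (norm_nonneg _)
        linarith
    _ ≤ ((Cα + Cβ) / clow * L + (Cα + σ ^ 2 * Cβ) / clow + 1) * ‖x - x'‖ := by
        nlinarith [norm_nonneg (x - x')]
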